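/- arXiv:2508.05831 — 2 statements merged into one kernel-verified Lean document; each statement's English description precedes it below -/
import Mathlib

section
/- Let X : Ω → ℝⁿ and ε : Ω → ℝᵐ be square-integrable random vectors on a probability space, with X and ε independent and E[ε] = 0. Let F ∈ ℝ^{m×n}, set Y = F X + ε, Γ_X = E[X Xᵀ], Γ_Y = E[Y Yᵀ], and suppose L_Y has full column rank with Γ_Y = L_Y L_Yᵀ. Let M be a best rank-≤r approximation of C = Γ_X Fᵀ (L_Y†)ᵀ in the Frobenius norm, and set Â = M L_Y†. Then rank(Â) ≤ r and for every A ∈ ℝ^{n×m} with rank(A) ≤ r, E‖Â Y − X‖₂² ≤ E‖A Y − X‖₂². -/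
open Matrix MeasureTheory

/-- Second (cross-)moment matrix `E[X Yᵀ]` of two random vectors. -/
noncomputable def secondMoment {Ω : Type} [MeasurableSpace Ω] (μ : Measure Ω)
    {n m : ℕ} (X : Ω → Fin n → ℝ) (Y : Ω → Fin m → ℝ) : Matrix (Fin n) (Fin m) ℝ :=
  Matrix.of fun i j => ∫ ω, X ω i * Y ω j ∂μ

/-- Frobenius norm of a real matrix. -/
noncomputable def frob {m n : ℕ} (A : Matrix (Fin m) (Fin n) ℝ) : ℝ :=
  Real.sqrt (∑ i, ∑ j, (A i j) ^ 2)

/-- `Ad` is the Moore–Penrose pseudoinverse of `A` (the four Penrose conditions). -/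
def IsMoorePenrose {m n : ℕ} (A : Matrix (Fin m) (Fin n) ℝ)
    (Ad : Matrix (Fin n) (Fin m) ℝ) : Prop :=
  A * Ad * A = A ∧ Ad * A * Ad = Ad ∧ (A * Ad)ᵀ = A * Ad ∧ (Ad * A)ᵀ = Ad * A

section aux
open ProbabilityTheory
set_option linter.unusedSectionVars false
variable {Ω : Type} [MeasurableSpace Ω] {μ : Measure Ω} [IsProbabilityMeasure μ]

lemma memL2_apply {k : ℕ} {f : Ω → Fin k → ℝ} (hf : MemLp f 2 μ) (i : Fin k) :
    MemLp (fun ω => f ω i) 2 μ :=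
  (ContinuousLinearMap.proj (R := ℝ) (φ := fun _ : Fin k => ℝ) i).comp_memLp' hf

lemma int_mul2 {f g : Ω → ℝ} (hf : MemLp f 2 μ) (hg : MemLp g 2 μ) :
    Integrable (fun ω => f ω * g ω) μ := by
  have h1 := (hf.add hg).integrable_sq
  have h2 := hf.integrable_sq
  have h3 := hg.integrable_sq
  have he : (fun ω => f ω * g ω)
      = fun ω => (((f + g) ω) ^ 2 - (f ω) ^ 2 - (g ω) ^ 2) / 2 := by
    funext ω; simp only [Pi.add_apply]; ring
  rw [he]
  exact ((h1.sub h2).sub h3).div_const 2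

lemma int_entry {a b : ℕ} {f : Ω → Fin a → ℝ} {g : Ω → Fin b → ℝ}
    (hf : MemLp f 2 μ) (hg : MemLp g 2 μ) (i : Fin a) (j : Fin b) :
    Integrable (fun ω => f ω i * g ω j) μ :=
  int_mul2 (memL2_apply hf i) (memL2_apply hg j)

lemma memL2_mulVec {a c : ℕ} (A : Matrix (Fin c) (Fin a) ℝ) {f : Ω → Fin a → ℝ}
    (hf : MemLp f 2 μ) : MemLp (fun ω => A *ᵥ f ω) 2 μ :=
  (LinearMap.toContinuousLinearMap A.mulVecLin).comp_memLp' hf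

lemma sm_transpose {a b : ℕ} (f : Ω → Fin a → ℝ) (g : Ω → Fin b → ℝ) :
    (secondMoment μ f g)ᵀ = secondMoment μ g f := by
  ext i j
  simp only [secondMoment, transpose_apply, of_apply, mul_comm]

lemma sm_add_left {a b : ℕ} {f g : Ω → Fin a → ℝ} {h : Ω → Fin b → ℝ}
    (hf : MemLp f 2 μ) (hg : MemLp g 2 μ) (hh : MemLp h 2 μ) :
    secondMoment μ (fun ω => f ω + g ω) h
      = secondMoment μ f h + secondMoment μ g h := by
  ext i j
  simp only [secondMoment, of_apply, Matrix.add_apply]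
  rw [← integral_add (int_entry hf hh i j) (int_entry hg hh i j)]
  congr 1; funext ω; simp only [Pi.add_apply]; ring

lemma sm_add_right {a b : ℕ} {f : Ω → Fin a → ℝ} {g h : Ω → Fin b → ℝ}
    (hf : MemLp f 2 μ) (hg : MemLp g 2 μ) (hh : MemLp h 2 μ) :
    secondMoment μ f (fun ω => g ω + h ω)
      = secondMoment μ f g + secondMoment μ f h := by
  ext i j
  simp only [secondMoment, of_apply, Matrix.add_apply]
  rw [← integral_add (int_entry hf hg i j) (int_entry hf hh i j)]
  congr 1; funext ω; simp only [Pi.add_apply]; ring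

lemma sm_sub_left {a b : ℕ} {f g : Ω → Fin a → ℝ} {h : Ω → Fin b → ℝ}
    (hf : MemLp f 2 μ) (hg : MemLp g 2 μ) (hh : MemLp h 2 μ) :
    secondMoment μ (fun ω => f ω - g ω) h
      = secondMoment μ f h - secondMoment μ g h := by
  ext i j
  simp only [secondMoment, of_apply, Matrix.sub_apply]
  rw [← integral_sub (int_entry hf hh i j) (int_entry hg hh i j)]
  congr 1; funext ω; simp only [Pi.sub_apply]; ring

lemma sm_sub_right {a b : ℕ} {f : Ω → Fin a → ℝ} {g h : Ω → Fin b → ℝ}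
    (hf : MemLp f 2 μ) (hg : MemLp g 2 μ) (hh : MemLp h 2 μ) :
    secondMoment μ f (fun ω => g ω - h ω)
      = secondMoment μ f g - secondMoment μ f h := by
  ext i j
  simp only [secondMoment, of_apply, Matrix.sub_apply]
  rw [← integral_sub (int_entry hf hg i j) (int_entry hf hh i j)]
  congr 1; funext ω; simp only [Pi.sub_apply]; ring

lemma sm_mulVec_left {a b c : ℕ} (A : Matrix (Fin c) (Fin a) ℝ)
    {f : Ω → Fin a → ℝ} {g : Ω → Fin b → ℝ}
    (hf : MemLp f 2 μ) (hg : MemLp g 2 μ) :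
    secondMoment μ (fun ω => A *ᵥ f ω) g = A * secondMoment μ f g := by
  ext i j
  simp only [secondMoment, of_apply, Matrix.mul_apply, Matrix.mulVec, dotProduct]
  have he : (fun ω => (∑ k, A i k * f ω k) * g ω j)
      = fun ω => ∑ k, A i k * (f ω k * g ω j) := by
    funext ω; rw [Finset.sum_mul]; exact Finset.sum_congr rfl fun k _ => mul_assoc _ _ _
  rw [he, integral_finset_sum _ (fun k _ => (int_entry hf hg k j).const_mul _)]
  exact Finset.sum_congr rfl fun k _ => integral_const_mul _ _

lemma sm_mulVec_right {a b c : ℕ} (A : Matrix (Fin c) (Fin b) ℝ)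
    {f : Ω → Fin a → ℝ} {g : Ω → Fin b → ℝ}
    (hf : MemLp f 2 μ) (hg : MemLp g 2 μ) :
    secondMoment μ f (fun ω => A *ᵥ g ω) = secondMoment μ f g * Aᵀ := by
  rw [← transpose_transpose (secondMoment μ f g * Aᵀ), transpose_mul, transpose_transpose,
    sm_transpose, ← sm_mulVec_left A hg hf, sm_transpose]

lemma sm_indep_zero {a b : ℕ} {f : Ω → Fin a → ℝ} {g : Ω → Fin b → ℝ}
    (hf : MemLp f 2 μ) (hg : MemLp g 2 μ) (hind : IndepFun f g μ)
    (hmean : (∫ ω, f ω ∂μ) = 0) : secondMoment μ f g = 0 := by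
  ext i j
  have hfi : Integrable (fun ω => f ω i) μ := (memL2_apply hf i).integrable one_le_two
  have hgj : Integrable (fun ω => g ω j) μ := (memL2_apply hg j).integrable one_le_two
  have hind' : IndepFun (fun ω => f ω i) (fun ω => g ω j) μ :=
    hind.comp (measurable_pi_apply i) (measurable_pi_apply j)
  have hmul := hind'.integral_mul_eq_mul_integral hfi.aestronglyMeasurable hgj.aestronglyMeasurable
  have hfmean : (∫ ω, f ω i ∂μ) = 0 := by
    have hfint : Integrable f μ := hf.integrable one_le_two
    have := (ContinuousLinearMap.proj (R := ℝ)
      (φ := fun _ : Fin a => ℝ) i).integral_comp_comm hfint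
    simpa [hmean] using this
  simp only [secondMoment, of_apply, Matrix.zero_apply]
  show integral μ ((fun ω => f ω i) * fun ω => g ω j) = 0
  rw [hmul, hfmean, zero_mul]

lemma sm_posSemidef {a : ℕ} {f : Ω → Fin a → ℝ} (hf : MemLp f 2 μ) :
    (secondMoment μ f f).PosSemidef := by
  refine posSemidef_iff_dotProduct_mulVec.mpr ⟨?_, ?_⟩
  · ext i j
    simp only [secondMoment, conjTranspose_apply, of_apply, star_trivial, mul_comm]
  · intro x
    simp only [star_trivial, dotProduct, Matrix.mulVec, secondMoment, of_apply]
    have he : ∀ i, x i * (∑ j, (∫ ω, f ω i * f ω j ∂μ) * x j)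
        = ∫ ω, ∑ j, x i * (f ω i * f ω j * x j) ∂μ := by
      intro i
      rw [integral_finset_sum _ (fun j _ => by
        simpa [mul_comm, mul_assoc, mul_left_comm] using
          ((int_entry hf hf i j).mul_const (x j)).const_mul (x i))]
      rw [Finset.mul_sum]
      refine Finset.sum_congr rfl fun j _ => ?_
      rw [integral_const_mul, integral_mul_const]
    simp_rw [he]
    rw [← integral_finset_sum _ (fun i _ => integrable_finset_sum _ (fun j _ => by
      simpa [mul_comm, mul_assoc, mul_left_comm] using
        ((int_entry hf hf i j).mul_const (x j)).const_mul (x i)))]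
    refine integral_nonneg fun ω => ?_
    have hsq : ∑ i, ∑ j, x i * (f ω i * f ω j * x j) = (∑ i, x i * f ω i) ^ 2 := by
      rw [sq, Finset.sum_mul_sum]
      exact Finset.sum_congr rfl fun i _ => Finset.sum_congr rfl fun j _ => by ring
    rw [hsq]
    positivity

end aux

section mat

lemma frob_sq {a b : ℕ} (A : Matrix (Fin a) (Fin b) ℝ) :
    frob A ^ 2 = ∑ i, ∑ j, (A i j) ^ 2 :=
  Real.sq_sqrt (Finset.sum_nonneg fun _ _ => Finset.sum_nonneg fun _ _ => sq_nonneg _)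

lemma frob_sub_comm {a b : ℕ} (A B : Matrix (Fin a) (Fin b) ℝ) :
    frob (A - B) = frob (B - A) := by
  unfold frob
  congr 1
  refine Finset.sum_congr rfl fun i _ => Finset.sum_congr rfl fun j _ => ?_
  simp only [Matrix.sub_apply]; ring

lemma trace_mul_transpose_self {a b : ℕ} (W : Matrix (Fin a) (Fin b) ℝ) :
    (W * Wᵀ).trace = ∑ i, ∑ j, W i j ^ 2 := by
  simp [Matrix.trace, Matrix.diag, Matrix.mul_apply, sq]

lemma frob_sq_eq_trace {a b : ℕ} (A : Matrix (Fin a) (Fin b) ℝ) :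
    frob A ^ 2 = (A * Aᵀ).trace := by
  rw [frob_sq, trace_mul_transpose_self]

lemma W1_eq_zero {a b c : ℕ} {W1 : Matrix (Fin a) (Fin b) ℝ} {W2 : Matrix (Fin a) (Fin c) ℝ}
    (h : W1 * W1ᵀ + W2 * W2ᵀ = 0) : W1 = 0 := by
  have ht := congrArg Matrix.trace h
  rw [Matrix.trace_add, trace_mul_transpose_self, trace_mul_transpose_self,
    Matrix.trace_zero] at ht
  have h2 : (0:ℝ) ≤ ∑ i, ∑ j, W2 i j ^ 2 :=
    Finset.sum_nonneg fun _ _ => Finset.sum_nonneg fun _ _ => sq_nonneg _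
  have h1' : (0:ℝ) ≤ ∑ i, ∑ j, W1 i j ^ 2 :=
    Finset.sum_nonneg fun _ _ => Finset.sum_nonneg fun _ _ => sq_nonneg _
  have h1 : ∑ i, ∑ j, W1 i j ^ 2 = 0 := le_antisymm (by linarith) h1'
  ext i j
  have hrow := (Finset.sum_eq_zero_iff_of_nonneg
    (fun i _ => Finset.sum_nonneg fun j _ => sq_nonneg (W1 i j))).mp h1 i (Finset.mem_univ i)
  have hentry := (Finset.sum_eq_zero_iff_of_nonneg
    (fun j _ => sq_nonneg (W1 i j))).mp hrow j (Finset.mem_univ j)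
  simpa using pow_eq_zero_iff (n := 2) (by norm_num) |>.mp hentry

lemma pinv_left_inv {m p : ℕ} {L : Matrix (Fin m) (Fin p) ℝ} {Ld : Matrix (Fin p) (Fin m) ℝ}
    (h : IsMoorePenrose L Ld) (hrank : L.rank = p) : Ld * L = 1 := by
  have hinj : Function.Injective L.mulVecLin := by
    rw [← LinearMap.ker_eq_bot, ← Submodule.finrank_eq_zero]
    have hrn := L.mulVecLin.finrank_range_add_finrank_ker
    have hdom : Module.finrank ℝ (Fin p → ℝ) = p := by simp
    rw [hdom] at hrn
    have : Module.finrank ℝ (LinearMap.range L.mulVecLin) = p := hrank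
    omega
  have hLdL : L * (Ld * L) = L := by
    rw [← Matrix.mul_assoc, h.1]
  have key : ∀ v, (Ld * L) *ᵥ v = v := by
    intro v
    apply hinj
    show L *ᵥ ((Ld * L) *ᵥ v) = L *ᵥ v
    rw [Matrix.mulVec_mulVec, hLdL]
  ext i j
  have h1 := congrFun (key (Pi.single j 1)) i
  rw [Matrix.mulVec_single_one] at h1
  simp only [Matrix.col_apply] at h1
  rw [h1]
  simp [Matrix.one_apply, Pi.single_apply, eq_comm]

open scoped MatrixOrder in
lemma psd_factor {n : ℕ} {A : Matrix (Fin n) (Fin n) ℝ} (h : A.PosSemidef) :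
    ∃ B : Matrix (Fin n) (Fin n) ℝ, A = Bᴴ * B := by
  obtain ⟨B, hB⟩ := CStarAlgebra.nonneg_iff_eq_star_mul_self.mp h.nonneg
  exact ⟨B, hB⟩

end mat

/-- Inverse end-to-end problem: `Â = (Γ_X Fᵀ (L_Y†)ᵀ)_r L_Y†` is an optimal
rank-`≤ r` linear inverse map, minimizing `E‖A Y − X‖₂²` over `rank(A) ≤ r`. -/
theorem inverse_end_to_end_optimal {Ω : Type} [MeasurableSpace Ω]
    (μ : Measure Ω) [IsProbabilityMeasure μ] {n m p r : ℕ}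
    (X : Ω → Fin n → ℝ) (ε : Ω → Fin m → ℝ)
    (hX : MemLp X 2 μ) (hε : MemLp ε 2 μ)
    (hindep : ProbabilityTheory.IndepFun X ε μ)
    (hmean : (∫ ω, ε ω ∂μ) = 0)
    (F : Matrix (Fin m) (Fin n) ℝ)
    (LY : Matrix (Fin m) (Fin p) ℝ) (hLYrank : LY.rank = p)
    (hLY : secondMoment μ (fun ω => F *ᵥ X ω + ε ω) (fun ω => F *ᵥ X ω + ε ω)
        = LY * LYᵀ)
    (LYd : Matrix (Fin p) (Fin m) ℝ) (hLYd : IsMoorePenrose LY LYd)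
    (M : Matrix (Fin n) (Fin p) ℝ)
    (hMrank : M.rank ≤ r)
    (hMbest : ∀ N : Matrix (Fin n) (Fin p) ℝ, N.rank ≤ r →
      frob (secondMoment μ X X * Fᵀ * LYdᵀ - M)
        ≤ frob (secondMoment μ X X * Fᵀ * LYdᵀ - N)) :
    (M * LYd).rank ≤ r ∧
      ∀ A : Matrix (Fin n) (Fin m) ℝ, A.rank ≤ r →
        ∫ ω, ∑ i, ((M * LYd) *ᵥ (F *ᵥ X ω + ε ω) - X ω) i ^ 2 ∂μ
          ≤ ∫ ω, ∑ i, (A *ᵥ (F *ᵥ X ω + ε ω) - X ω) i ^ 2 ∂μ := by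
  obtain ⟨hP1, hP2, hP3, hP4⟩ := hLYd
  have hFX : MemLp (fun ω => F *ᵥ X ω) 2 μ := memL2_mulVec F hX
  have hY : MemLp (fun ω => F *ᵥ X ω + ε ω) 2 μ := hFX.add hε
  set ΓX := secondMoment μ X X with hΓXdef
  set Cm := ΓX * Fᵀ * LYdᵀ with hCdef
  have hΓXsym : ΓXᵀ = ΓX := sm_transpose X X
  have hεX : secondMoment μ ε X = 0 := sm_indep_zero hε hX hindep.symm hmean
  have hXε : secondMoment μ X ε = 0 := by
    rw [← sm_transpose ε X, hεX, Matrix.transpose_zero]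
  have hS : secondMoment μ (fun ω => F *ᵥ X ω + ε ω) X = F * ΓX := by
    rw [sm_add_left hFX hε hX, sm_mulVec_left F hX hX, hεX, add_zero, hΓXdef]
  have hG : LY * LYᵀ = F * ΓX * Fᵀ + secondMoment μ ε ε := by
    rw [← hLY, sm_add_left hFX hε hY, sm_add_right hFX hFX hε, sm_add_right hε hFX hε,
      sm_mulVec_left F hX hFX, sm_mulVec_right F hX hX, sm_mulVec_left F hX hε, hXε,
      sm_mulVec_right F hε hX, hεX, Matrix.mul_zero, Matrix.zero_mul, add_zero, zero_add,
      ← Matrix.mul_assoc]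
  -- projection fact
  have hLd : LYd * LY = 1 := pinv_left_inv ⟨hP1, hP2, hP3, hP4⟩ hLYrank
  obtain ⟨B, hB⟩ := psd_factor (sm_posSemidef hX)
  obtain ⟨E, hE⟩ := psd_factor (sm_posSemidef hε)
  rw [Matrix.conjTranspose_eq_transpose_of_trivial] at hB hE
  rw [← hΓXdef] at hB
  set Q : Matrix (Fin m) (Fin m) ℝ := 1 - LY * LYd with hQdef
  have hQL : Q * LY = 0 := by
    rw [hQdef, Matrix.sub_mul, Matrix.one_mul, hP1, sub_self]
  have hQGQ : Q * (LY * LYᵀ) * Qᵀ = 0 := by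
    rw [← Matrix.mul_assoc, hQL, Matrix.zero_mul, Matrix.zero_mul]
  have hsum : (Q * F * Bᵀ) * (Q * F * Bᵀ)ᵀ + (Q * Eᵀ) * (Q * Eᵀ)ᵀ = 0 := by
    have hiden : Q * (LY * LYᵀ) * Qᵀ
        = (Q * F * Bᵀ) * (Q * F * Bᵀ)ᵀ + (Q * Eᵀ) * (Q * Eᵀ)ᵀ := by
      rw [hG, hB, hE]
      simp only [Matrix.transpose_mul, Matrix.transpose_transpose, Matrix.mul_add,
        Matrix.add_mul, Matrix.mul_assoc]
    rw [← hiden, hQGQ]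
  have hW1 : Q * F * Bᵀ = 0 := W1_eq_zero hsum
  have hQFΓX : Q * (F * ΓX) = 0 := by
    rw [hB, show Q * (F * (Bᵀ * B)) = (Q * F * Bᵀ) * B by
      rw [Matrix.mul_assoc, Matrix.mul_assoc], hW1, Matrix.zero_mul]
  have hproj : LY * LYd * (F * ΓX) = F * ΓX := by
    have h0 : (1 - LY * LYd) * (F * ΓX) = 0 := hQFΓX
    rw [Matrix.sub_mul, Matrix.one_mul, sub_eq_zero] at h0
    exact h0.symm
  -- transposes of C
  have hCt : Cmᵀ = LYd * (F * ΓX) := by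
    rw [hCdef, Matrix.transpose_mul, Matrix.transpose_mul, Matrix.transpose_transpose,
      Matrix.transpose_transpose, hΓXsym]
  have hLYCt : LY * Cmᵀ = F * ΓX := by
    rw [hCt, ← Matrix.mul_assoc, hproj]
  -- second moment of residual
  have hZmem : ∀ A : Matrix (Fin n) (Fin m) ℝ,
      MemLp (fun ω => A *ᵥ (F *ᵥ X ω + ε ω) - X ω) 2 μ :=
    fun A => (memL2_mulVec A hY).sub hX
  have hsmZ : ∀ A : Matrix (Fin n) (Fin m) ℝ,
      secondMoment μ (fun ω => A *ᵥ (F *ᵥ X ω + ε ω) - X ω)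
          (fun ω => A *ᵥ (F *ᵥ X ω + ε ω) - X ω)
        = A * (LY * LYᵀ) * Aᵀ - A * (F * ΓX) - (F * ΓX)ᵀ * Aᵀ + ΓX := by
    intro A
    have hAY : MemLp (fun ω => A *ᵥ (F *ᵥ X ω + ε ω)) 2 μ := memL2_mulVec A hY
    rw [sm_sub_left hAY hX (hZmem A), sm_sub_right hAY hAY hX, sm_sub_right hX hAY hX,
      sm_mulVec_left A hY hAY, sm_mulVec_right A hY hY, sm_mulVec_left A hY hX,
      sm_mulVec_right A hX hY, hLY, hS, ← sm_transpose (fun ω => F *ᵥ X ω + ε ω) X, hS,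
      ← hΓXdef, ← Matrix.mul_assoc]
    abel
  -- the objective in closed form
  have hJ : ∀ A : Matrix (Fin n) (Fin m) ℝ,
      (∫ ω, ∑ i, (A *ᵥ (F *ᵥ X ω + ε ω) - X ω) i ^ 2 ∂μ)
        = ((A * LY - Cm) * (A * LY - Cm)ᵀ).trace + (ΓX.trace - (Cm * Cmᵀ).trace) := by
    intro A
    rw [integral_finset_sum _ (fun i _ => (memL2_apply (hZmem A) i).integrable_sq)]
    have step1 : ∑ i, ∫ ω, (A *ᵥ (F *ᵥ X ω + ε ω) - X ω) i ^ 2 ∂μ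
        = (secondMoment μ (fun ω => A *ᵥ (F *ᵥ X ω + ε ω) - X ω)
            (fun ω => A *ᵥ (F *ᵥ X ω + ε ω) - X ω)).trace := by
      rw [Matrix.trace]
      refine Finset.sum_congr rfl fun i _ => ?_
      simp only [Matrix.diag, secondMoment, Matrix.of_apply]
      congr 1; funext ω; rw [sq]
    rw [step1, hsmZ A]
    have hexp : (A * LY - Cm) * (A * LY - Cm)ᵀ
        = A * (LY * LYᵀ) * Aᵀ - A * (F * ΓX) - (F * ΓX)ᵀ * Aᵀ + Cm * Cmᵀ := by
      rw [Matrix.transpose_sub, Matrix.transpose_mul, Matrix.mul_sub, Matrix.sub_mul,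
        Matrix.sub_mul]
      have e1 : A * LY * (LYᵀ * Aᵀ) = A * (LY * LYᵀ) * Aᵀ := by
        rw [Matrix.mul_assoc, Matrix.mul_assoc, Matrix.mul_assoc]
      have e2 : A * LY * Cmᵀ = A * (F * ΓX) := by
        rw [Matrix.mul_assoc, hLYCt]
      have e3 : Cm * (LYᵀ * Aᵀ) = (F * ΓX)ᵀ * Aᵀ := by
        rw [← Matrix.mul_assoc, show Cm * LYᵀ = (LY * Cmᵀ)ᵀ by
          rw [Matrix.transpose_mul, Matrix.transpose_transpose], hLYCt]
      rw [e1, e2, e3]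
      abel
    rw [hexp]
    simp only [Matrix.trace_add, Matrix.trace_sub]
    ring
  constructor
  · exact le_trans (Matrix.rank_mul_le_left M LYd) hMrank
  · intro A hA
    rw [hJ (M * LYd), hJ A]
    have hML : M * LYd * LY = M := by rw [Matrix.mul_assoc, hLd, Matrix.mul_one]
    rw [hML]
    have hr : (A * LY).rank ≤ r := le_trans (Matrix.rank_mul_le_left A LY) hA
    have hb := hMbest (A * LY) hr
    have e1 : ((M - Cm) * (M - Cm)ᵀ).trace = frob (Cm - M) ^ 2 := by
      rw [← frob_sq_eq_trace, frob_sub_comm]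
    have e2 : ((A * LY - Cm) * (A * LY - Cm)ᵀ).trace = frob (Cm - A * LY) ^ 2 := by
      rw [← frob_sq_eq_trace, frob_sub_comm]
    have hsq : frob (Cm - M) ^ 2 ≤ frob (Cm - A * LY) ^ 2 :=
      pow_le_pow_left₀ (Real.sqrt_nonneg _) hb 2
    rw [e1, e2]
    linarith
end

section
/- Let X : Ω → ℝⁿ and ε : Ω → ℝᵐ be square-integrable random vectors on a probability space, with X and ε independent and E[ε] = 0. Let F ∈ ℝ^{m×n}, set Y = F X + ε, Γ_X = E[X Xᵀ], and Γ_Y = E[Y Yᵀ]. Then the matrix Â = Γ_X Fᵀ Γ_Y† attains the global minimum of the Bayes risk: for every A ∈ ℝ^{n×m}, E‖Â Y − X‖₂² ≤ E‖A Y − X‖₂². -/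
open Matrix MeasureTheory

private lemma l2_mul_int {Ω : Type} [MeasurableSpace Ω] {μ : Measure Ω} {f g : Ω → ℝ}
    (hf : MemLp f 2 μ) (hg : MemLp g 2 μ) : Integrable (fun ω => f ω * g ω) μ := by
  have h : MemLp (f • g) 1 μ := MemLp.smul (r := 1) hg hf
  exact memLp_one_iff_integrable.mp h

private lemma l2_proj {Ω : Type} [MeasurableSpace Ω] {μ : Measure Ω} {k : ℕ}
    {f : Ω → Fin k → ℝ} (hf : MemLp f 2 μ) (i : Fin k) : MemLp (fun ω => f ω i) 2 μ :=
  (ContinuousLinearMap.proj (R := ℝ) (φ := fun _ : Fin k => ℝ) i).comp_memLp' hf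

/-- Unconstrained optimal linear inverse estimator: `Â = Γ_X Fᵀ Γ_Y†` attains the
global minimum of `E‖A Y − X‖₂²` over all `A`. -/
theorem inverse_full_rank_optimal {Ω : Type} [MeasurableSpace Ω]
    (μ : Measure Ω) [IsProbabilityMeasure μ] {n m : ℕ}
    (X : Ω → Fin n → ℝ) (ε : Ω → Fin m → ℝ)
    (hX : MemLp X 2 μ) (hε : MemLp ε 2 μ)
    (hindep : ProbabilityTheory.IndepFun X ε μ)
    (hmean : (∫ ω, ε ω ∂μ) = 0)
    (F : Matrix (Fin m) (Fin n) ℝ)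
    (GYd : Matrix (Fin m) (Fin m) ℝ)
    (hGYd : IsMoorePenrose
      (secondMoment μ (fun ω => F *ᵥ X ω + ε ω) (fun ω => F *ᵥ X ω + ε ω)) GYd) :
    ∀ A : Matrix (Fin n) (Fin m) ℝ,
      ∫ ω, ∑ i, ((secondMoment μ X X * Fᵀ * GYd) *ᵥ (F *ᵥ X ω + ε ω) - X ω) i ^ 2 ∂μ
        ≤ ∫ ω, ∑ i, (A *ᵥ (F *ᵥ X ω + ε ω) - X ω) i ^ 2 ∂μ := by
  intro A
  set Y : Ω → Fin m → ℝ := fun ω => F *ᵥ X ω + ε ω with hYdef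
  set G : Matrix (Fin m) (Fin m) ℝ := secondMoment μ Y Y with hGdef
  set C : Matrix (Fin n) (Fin m) ℝ := secondMoment μ X Y with hCdef
  set Ah : Matrix (Fin n) (Fin m) ℝ := secondMoment μ X X * Fᵀ * GYd with hAhdef
  have hXi : ∀ i, MemLp (fun ω => X ω i) 2 μ := l2_proj hX
  have hεj : ∀ j, MemLp (fun ω => ε ω j) 2 μ := l2_proj hε
  have hYapp : ∀ ω j, Y ω j = (∑ k, F j k * X ω k) + ε ω j := by
    intro ω j; simp [hYdef, Matrix.mulVec, dotProduct]
  have hYj : ∀ j, MemLp (fun ω => Y ω j) 2 μ := by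
    intro j
    have : (fun ω => Y ω j) = fun ω => (∑ k, F j k * X ω k) + ε ω j := funext fun ω => hYapp ω j
    rw [this]
    exact (memLp_finset_sum _ fun k _ => (hXi k).const_mul _).add (hεj j)
  have hMv : ∀ (M : Matrix (Fin n) (Fin m) ℝ) (i), MemLp (fun ω => (M *ᵥ Y ω) i) 2 μ := by
    intro M i
    have : (fun ω => (M *ᵥ Y ω) i) = fun ω => ∑ j, M i j * Y ω j := by
      funext ω; simp [Matrix.mulVec, dotProduct]
    rw [this]
    exact memLp_finset_sum _ fun j _ => (hYj j).const_mul _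
  -- mean of ε components is zero
  have hεint0 : ∀ j, (∫ ω, ε ω j ∂μ) = 0 := by
    intro j
    have h := (ContinuousLinearMap.proj (R := ℝ) (φ := fun _ : Fin m => ℝ) j).integral_comp_comm
      (hε.integrable one_le_two)
    simpa [hmean] using h
  -- independence gives zero cross term
  have hXε : ∀ i j, ∫ ω, X ω i * ε ω j ∂μ = 0 := by
    intro i j
    have h : ProbabilityTheory.IndepFun (fun ω => X ω i) (fun ω => ε ω j) μ :=
      hindep.comp (measurable_pi_apply i) (measurable_pi_apply j)
    have h2 := h.integral_mul_eq_mul_integral (hXi i).aestronglyMeasurable (hεj j).aestronglyMeasurable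
    simpa [Pi.mul_apply, hεint0 j] using h2
  -- C = Γ_X Fᵀ
  have hCeq : secondMoment μ X X * Fᵀ = C := by
    ext i j
    have expand : ∀ ω, X ω i * Y ω j = (∑ k, F j k * (X ω i * X ω k)) + X ω i * ε ω j := by
      intro ω
      rw [hYapp ω j, mul_add, Finset.mul_sum]
      congr 1
      exact Finset.sum_congr rfl fun k _ => by ring
    have hint1 : Integrable (fun ω => ∑ k, F j k * (X ω i * X ω k)) μ :=
      integrable_finset_sum _ fun k _ => (l2_mul_int (hXi i) (hXi k)).const_mul _
    have hint2 : Integrable (fun ω => X ω i * ε ω j) μ := l2_mul_int (hXi i) (hεj j)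
    have : C i j = (∑ k, F j k * ∫ ω, X ω i * X ω k ∂μ) := by
      show (∫ ω, X ω i * Y ω j ∂μ) = _
      simp_rw [expand]
      rw [integral_add hint1 hint2, integral_finset_sum _
        (fun k _ => (l2_mul_int (hXi i) (hXi k)).const_mul _), hXε i j, add_zero]
      exact Finset.sum_congr rfl fun k _ => integral_const_mul _ _
    rw [this]
    show ∑ k, (∫ ω, X ω i * X ω k ∂μ) * Fᵀ k j = _
    exact Finset.sum_congr rfl fun k _ => by rw [Matrix.transpose_apply]; ring
  -- kernel inclusion : ker G ⊆ ker C
  have hker : ∀ v : Fin m → ℝ, G *ᵥ v = 0 → C *ᵥ v = 0 := by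
    intro v hv
    set s : Ω → ℝ := fun ω => ∑ j, v j * Y ω j with hsdef
    have hs2 : MemLp s 2 μ := memLp_finset_sum _ fun j _ => ((hYj j).const_mul _)
    have hexp : ∀ ω, s ω ^ 2 = ∑ j, ∑ k, v j * v k * (Y ω j * Y ω k) := by
      intro ω
      rw [sq, hsdef, Finset.sum_mul_sum]
      exact Finset.sum_congr rfl fun j _ => Finset.sum_congr rfl fun k _ => by ring
    have hint : ∀ j k, Integrable (fun ω => v j * v k * (Y ω j * Y ω k)) μ :=
      fun j k => (l2_mul_int (hYj j) (hYj k)).const_mul _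
    have hs0 : ∫ ω, s ω ^ 2 ∂μ = 0 := by
      simp_rw [hexp]
      rw [integral_finset_sum _ (fun j _ => integrable_finset_sum _ fun k _ => hint j k)]
      have : ∀ j, (∫ ω, ∑ k, v j * v k * (Y ω j * Y ω k) ∂μ) = v j * ∑ k, G j k * v k := by
        intro j
        rw [integral_finset_sum _ (fun k _ => hint j k), Finset.mul_sum]
        refine Finset.sum_congr rfl fun k _ => ?_
        rw [integral_const_mul]
        show v j * v k * G j k = v j * (G j k * v k)
        ring
      simp_rw [this]
      have hvj : ∀ j, ∑ k, G j k * v k = 0 := by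
        intro j
        have := congrFun hv j
        simpa [Matrix.mulVec, dotProduct] using this
      simp [hvj]
    have hsae : s =ᵐ[μ] 0 := by
      have hnn : 0 ≤ᵐ[μ] fun ω => s ω ^ 2 := Filter.Eventually.of_forall fun ω => sq_nonneg _
      have hi : Integrable (fun ω => s ω ^ 2) μ := by
        simpa [sq] using l2_mul_int hs2 hs2
      have := (integral_eq_zero_iff_of_nonneg_ae hnn hi).mp hs0
      filter_upwards [this] with ω hω
      exact pow_eq_zero_iff two_ne_zero |>.mp (by simpa using hω)
    funext i
    have hXiS : ∀ j, Integrable (fun ω => X ω i * Y ω j * v j) μ :=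
      fun j => (l2_mul_int (hXi i) (hYj j)).mul_const _
    have key : (C *ᵥ v) i = ∫ ω, X ω i * s ω ∂μ := by
      show ∑ j, C i j * v j = _
      have : ∀ ω, X ω i * s ω = ∑ j, X ω i * Y ω j * v j := by
        intro ω; rw [hsdef, Finset.mul_sum]
        exact Finset.sum_congr rfl fun j _ => by ring
      simp_rw [this]
      rw [integral_finset_sum _ fun j _ => hXiS j]
      refine Finset.sum_congr rfl fun j _ => ?_
      rw [integral_mul_const]
      rfl
    have : ∫ ω, X ω i * s ω ∂μ = 0 := by
      have : (fun ω => X ω i * s ω) =ᵐ[μ] 0 := by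
        filter_upwards [hsae] with ω hω
        simp [hω]
      rw [integral_congr_ae this]
      simp
    rw [key, this]; rfl
  -- C G† G = C, hence Ah G = C
  have hAhG : Ah * G = C := by
    have hGM : G * (1 - GYd * G) = 0 := by
      rw [Matrix.mul_sub, Matrix.mul_one, ← Matrix.mul_assoc, hGYd.1, sub_self]
    have hCM : C * (GYd * G) = C := by
      have hz : C * (1 - GYd * G) = 0 := by
        ext i j
        have hv : G *ᵥ (fun k => (1 - GYd * G) k j) = 0 := by
          funext i'
          have := congrFun (congrFun hGM i') j
          simpa [Matrix.mul_apply, Matrix.mulVec, dotProduct] using this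
        have := congrFun (hker _ hv) i
        simpa [Matrix.mulVec, dotProduct, Matrix.mul_apply] using this
      rw [Matrix.mul_sub, Matrix.mul_one, sub_eq_zero] at hz
      exact hz.symm
    rw [hAhdef, hCeq, Matrix.mul_assoc]
    exact hCM
  -- symmetric G
  have hGsymm : ∀ j k, G j k = G k j := by
    intro j k
    show (∫ ω, Y ω j * Y ω k ∂μ) = ∫ ω, Y ω k * Y ω j ∂μ
    exact integral_congr_ae (Filter.Eventually.of_forall fun ω => mul_comm _ _)
  -- cross moments vanish
  have hR : ∀ i, MemLp (fun ω => (Ah *ᵥ Y ω) i - X ω i) 2 μ := fun i => (hMv Ah i).sub (hXi i)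
  have hcross : ∀ i j, ∫ ω, Y ω j * ((Ah *ᵥ Y ω) i - X ω i) ∂μ = 0 := by
    intro i j
    have expand : ∀ ω, Y ω j * ((Ah *ᵥ Y ω) i - X ω i)
        = (∑ k, Ah i k * (Y ω j * Y ω k)) - X ω i * Y ω j := by
      intro ω
      have : (Ah *ᵥ Y ω) i = ∑ k, Ah i k * Y ω k := rfl
      rw [this, mul_sub, Finset.mul_sum]
      congr 1
      · exact Finset.sum_congr rfl fun k _ => by ring
      · ring
    have hint1 : Integrable (fun ω => ∑ k, Ah i k * (Y ω j * Y ω k)) μ :=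
      integrable_finset_sum _ fun k _ => (l2_mul_int (hYj j) (hYj k)).const_mul _
    have hint2 : Integrable (fun ω => X ω i * Y ω j) μ := l2_mul_int (hXi i) (hYj j)
    simp_rw [expand]
    rw [integral_sub hint1 hint2,
      integral_finset_sum _ (fun k _ => (l2_mul_int (hYj j) (hYj k)).const_mul _)]
    have h1 : (∑ k, ∫ ω, Ah i k * (Y ω j * Y ω k) ∂μ) = (Ah * G) i j := by
      rw [Matrix.mul_apply]
      refine Finset.sum_congr rfl fun k _ => ?_
      rw [integral_const_mul]
      show Ah i k * G j k = Ah i k * G k j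
      rw [hGsymm]
    have h2 : (∫ ω, X ω i * Y ω j ∂μ) = C i j := rfl
    rw [h1, h2, hAhG, sub_self]
  have hcrossB : ∀ i, ∫ ω, ((A - Ah) *ᵥ Y ω) i * ((Ah *ᵥ Y ω) i - X ω i) ∂μ = 0 := by
    intro i
    have expand : ∀ ω, ((A - Ah) *ᵥ Y ω) i * ((Ah *ᵥ Y ω) i - X ω i)
        = ∑ j, (A - Ah) i j * (Y ω j * ((Ah *ᵥ Y ω) i - X ω i)) := by
      intro ω
      have : ((A - Ah) *ᵥ Y ω) i = ∑ j, (A - Ah) i j * Y ω j := rfl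
      rw [this, Finset.sum_mul]
      exact Finset.sum_congr rfl fun j _ => by ring
    simp_rw [expand]
    rw [integral_finset_sum _ (fun j _ => (l2_mul_int (hYj j) (hR i)).const_mul _)]
    refine Finset.sum_eq_zero fun j _ => ?_
    rw [integral_const_mul, hcross i j, mul_zero]
  -- the three integrands
  have hBv : ∀ i, MemLp (fun ω => ((A - Ah) *ᵥ Y ω) i) 2 μ := hMv (A - Ah)
  have hAv : ∀ i, MemLp (fun ω => (A *ᵥ Y ω) i - X ω i) 2 μ := fun i => (hMv A i).sub (hXi i)
  have hintG : Integrable (fun ω => ∑ i, ((Ah *ᵥ Y ω - X ω) i) ^ 2) μ := by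
    refine integrable_finset_sum _ fun i _ => ?_
    simpa [sq, Pi.sub_apply] using l2_mul_int (hR i) (hR i)
  have hintH : Integrable (fun ω => ∑ i, (((A - Ah) *ᵥ Y ω) i) ^ 2) μ := by
    refine integrable_finset_sum _ fun i _ => ?_
    simpa [sq] using l2_mul_int (hBv i) (hBv i)
  have hintC : Integrable (fun ω => ∑ i, ((A - Ah) *ᵥ Y ω) i * ((Ah *ᵥ Y ω) i - X ω i)) μ :=
    integrable_finset_sum _ fun i _ => l2_mul_int (hBv i) (hR i)
  have hpoint : ∀ ω, (∑ i, ((A *ᵥ Y ω - X ω) i) ^ 2)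
      = (∑ i, ((Ah *ᵥ Y ω - X ω) i) ^ 2)
        + ((∑ i, (((A - Ah) *ᵥ Y ω) i) ^ 2)
          + 2 * ∑ i, ((A - Ah) *ᵥ Y ω) i * ((Ah *ᵥ Y ω) i - X ω i)) := by
    intro ω
    rw [Finset.mul_sum, ← Finset.sum_add_distrib, ← Finset.sum_add_distrib]
    refine Finset.sum_congr rfl fun i _ => ?_
    have h1 : (A *ᵥ Y ω - X ω) i = ((A - Ah) *ᵥ Y ω) i + ((Ah *ᵥ Y ω) i - X ω i) := by
      rw [Matrix.sub_mulVec]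
      simp only [Pi.sub_apply]
      ring
    have h2 : (Ah *ᵥ Y ω - X ω) i = (Ah *ᵥ Y ω) i - X ω i := rfl
    rw [h1, h2]
    ring
  have hIeq : (∫ ω, ∑ i, ((A *ᵥ Y ω - X ω) i) ^ 2 ∂μ)
      = (∫ ω, ∑ i, ((Ah *ᵥ Y ω - X ω) i) ^ 2 ∂μ)
        + ((∫ ω, ∑ i, (((A - Ah) *ᵥ Y ω) i) ^ 2 ∂μ)
          + 2 * ∫ ω, ∑ i, ((A - Ah) *ᵥ Y ω) i * ((Ah *ᵥ Y ω) i - X ω i) ∂μ) := by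
    have hintHC : Integrable (fun ω => (∑ i, (((A - Ah) *ᵥ Y ω) i) ^ 2)
        + 2 * ∑ i, ((A - Ah) *ᵥ Y ω) i * ((Ah *ᵥ Y ω) i - X ω i)) μ :=
      hintH.add (hintC.const_mul 2)
    simp_rw [hpoint]
    rw [integral_add hintG hintHC, integral_add hintH (hintC.const_mul 2), integral_const_mul]
  have hC0 : (∫ ω, ∑ i, ((A - Ah) *ᵥ Y ω) i * ((Ah *ᵥ Y ω) i - X ω i) ∂μ) = 0 := by
    rw [integral_finset_sum _ (fun i _ => l2_mul_int (hBv i) (hR i))]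
    exact Finset.sum_eq_zero fun i _ => hcrossB i
  have hH0 : 0 ≤ ∫ ω, ∑ i, (((A - Ah) *ᵥ Y ω) i) ^ 2 ∂μ :=
    integral_nonneg fun ω => Finset.sum_nonneg fun i _ => sq_nonneg _
  calc (∫ ω, ∑ i, ((Ah *ᵥ Y ω - X ω) i) ^ 2 ∂μ)
      ≤ (∫ ω, ∑ i, ((Ah *ᵥ Y ω - X ω) i) ^ 2 ∂μ)
        + ((∫ ω, ∑ i, (((A - Ah) *ᵥ Y ω) i) ^ 2 ∂μ) + 2 * 0) := by
        rw [mul_zero, add_zero]; linarith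
    _ = ∫ ω, ∑ i, ((A *ᵥ Y ω - X ω) i) ^ 2 ∂μ := by rw [← hC0] at *; rw [hIeq]
end
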